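/- Let F be a field and P ∈ F[λ]^{m×n} with normal rank r > 0. Then P can be factorized in the following three ways: (i) P = L_c E R_r, where L_c ∈ F[λ]^{m×r} has columns forming a minimal basis of Col(P), R_r ∈ F[λ]^{r×n} has rows forming a minimal basis of Row(P), E ∈ F[λ]^{r×r}, and there exist unimodular U ∈ F[λ]^{m×m} and V ∈ F[λ]^{n×n} such that U P V equals the m×n matrix with E in its top-left r×r block and zeros elsewhere (i.e., E has the same invariant polynomials as P); (ii) P = L_c R, where L_c ∈ F[λ]^{m×r} has columns forming a minimal basis of Col(P), R ∈ F[λ]^{r×n}, and the m×n matrix obtained by stacking R on top of m−r zero rows is unimodularly equivalent to P (i.e., R has the same invariant polynomials as P); (iii) P = L R_r, where R_r ∈ F[λ]^{r×n} has rows forming a minimal basis of Row(P), L ∈ F[λ]^{m×r}, and the m×n matrix obtained by placing L next to n−r zero columns is unimodularly equivalent to P (i.e., L has the same invariant polynomials as P). -/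

import Mathlib

open Polynomial Matrix

noncomputable section

variable {F : Type*} [Field F]

/-- The matrix over the field of rational functions associated with a polynomial matrix. -/
def toRat {m n : ℕ} (P : Matrix (Fin m) (Fin n) F[X]) : Matrix (Fin m) (Fin n) (RatFunc F) :=
  P.map (algebraMap F[X] (RatFunc F))

/-- The normal rank of a polynomial matrix: its rank over the field of rational functions. -/
def normalRank {m n : ℕ} (P : Matrix (Fin m) (Fin n) F[X]) : ℕ := (toRat P).rank

/-- The degree of a polynomial matrix: the maximum of the degrees of its entries,
`⊥` (i.e. -∞) for the zero matrix. -/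
def matDeg {m n : ℕ} (P : Matrix (Fin m) (Fin n) F[X]) : WithBot ℕ :=
  Finset.univ.sup fun i : Fin m => Finset.univ.sup fun j : Fin n => (P i j).degree

/-- Degree of the i-th row. -/
def rowDeg {m n : ℕ} (P : Matrix (Fin m) (Fin n) F[X]) (i : Fin m) : WithBot ℕ :=
  Finset.univ.sup fun j : Fin n => (P i j).degree

/-- Degree of the j-th column. -/
def colDeg {m n : ℕ} (P : Matrix (Fin m) (Fin n) F[X]) (j : Fin n) : WithBot ℕ :=
  Finset.univ.sup fun i : Fin m => (P i j).degree

/-- Degree of the i-th row as a natural number (0 for a zero row). -/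
def rowDegNat {m n : ℕ} (P : Matrix (Fin m) (Fin n) F[X]) (i : Fin m) : ℕ :=
  Finset.univ.sup fun j : Fin n => (P i j).natDegree

/-- Degree of the j-th column as a natural number (0 for a zero column). -/
def colDegNat {m n : ℕ} (P : Matrix (Fin m) (Fin n) F[X]) (j : Fin n) : ℕ :=
  Finset.univ.sup fun i : Fin m => (P i j).natDegree

/-- Highest-row-degree coefficient matrix. -/
def hrMatrix {m n : ℕ} (P : Matrix (Fin m) (Fin n) F[X]) : Matrix (Fin m) (Fin n) F :=
  Matrix.of fun i j => (P i j).coeff (rowDegNat P i)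

/-- Highest-column-degree coefficient matrix. -/
def hcMatrix {m n : ℕ} (P : Matrix (Fin m) (Fin n) F[X]) : Matrix (Fin m) (Fin n) F :=
  Matrix.of fun i j => (P i j).coeff (colDegNat P j)

/-- A polynomial matrix is row reduced if its highest-row-degree coefficient matrix has
full row rank. -/
def RowReduced {m n : ℕ} (P : Matrix (Fin m) (Fin n) F[X]) : Prop := (hrMatrix P).rank = m

/-- A polynomial matrix is column reduced if its highest-column-degree coefficient matrix has
full column rank. -/
def ColReduced {m n : ℕ} (P : Matrix (Fin m) (Fin n) F[X]) : Prop := (hcMatrix P).rank = n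

/-- Evaluation of a polynomial matrix at a point of the algebraic closure. -/
def evalMat {m n : ℕ} (P : Matrix (Fin m) (Fin n) F[X]) (x : AlgebraicClosure F) :
    Matrix (Fin m) (Fin n) (AlgebraicClosure F) :=
  Matrix.of fun i j => aeval x (P i j)

/-- The rows of `P` form a minimal basis of the rational subspace they span (Forney's
characterization): full row rank at every point of the algebraic closure, and row reduced. -/
def IsMinimalRowBasis {m n : ℕ} (P : Matrix (Fin m) (Fin n) F[X]) : Prop :=
  (∀ x : AlgebraicClosure F, (evalMat P x).rank = m) ∧ RowReduced P

/-- The columns of `P` form a minimal basis of the rational subspace they span. -/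
def IsMinimalColBasis {m n : ℕ} (P : Matrix (Fin m) (Fin n) F[X]) : Prop :=
  (∀ x : AlgebraicClosure F, (evalMat P x).rank = n) ∧ ColReduced P

/-- The column space Col(P) over the field of rational functions. -/
def colSpace {m n : ℕ} (P : Matrix (Fin m) (Fin n) F[X]) :
    Submodule (RatFunc F) (Fin m → RatFunc F) :=
  LinearMap.range (toRat P).mulVecLin

/-- The row space Row(P) over the field of rational functions. -/
def rowSpace {m n : ℕ} (P : Matrix (Fin m) (Fin n) F[X]) :
    Submodule (RatFunc F) (Fin n → RatFunc F) :=
  LinearMap.range (toRat P)ᵀ.mulVecLin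

/-- The right nullspace N_r(P). -/
def rightNull {m n : ℕ} (P : Matrix (Fin m) (Fin n) F[X]) :
    Submodule (RatFunc F) (Fin n → RatFunc F) :=
  LinearMap.ker (toRat P).mulVecLin

/-- The left nullspace N_ℓ(P). -/
def leftNull {m n : ℕ} (P : Matrix (Fin m) (Fin n) F[X]) :
    Submodule (RatFunc F) (Fin m → RatFunc F) :=
  LinearMap.ker (toRat P)ᵀ.mulVecLin

section Helpers

variable {F : Type*} [Field F]

lemma toRat_mul {m n p : ℕ} (A : Matrix (Fin m) (Fin n) F[X]) (B : Matrix (Fin n) (Fin p) F[X]) :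
    toRat (A * B) = toRat A * toRat B :=
  Matrix.map_mul

lemma toRat_one {n : ℕ} : toRat (1 : Matrix (Fin n) (Fin n) F[X]) = 1 :=
  Matrix.map_one _ (map_zero _) (map_one _)

lemma toRat_transpose {m n : ℕ} (A : Matrix (Fin m) (Fin n) F[X]) :
    toRat Aᵀ = (toRat A)ᵀ := Matrix.transpose_map

lemma normalRank_transpose {m n : ℕ} (A : Matrix (Fin m) (Fin n) F[X]) :
    normalRank Aᵀ = normalRank A := by
  rw [normalRank, toRat_transpose, Matrix.rank_transpose, normalRank]

lemma toRat_det_isUnit {n : ℕ} {W : Matrix (Fin n) (Fin n) F[X]} (h : IsUnit W.det) :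
    IsUnit (toRat W).det := by
  have : toRat W = (algebraMap F[X] (RatFunc F)).mapMatrix W := rfl
  rw [this, ← RingHom.map_det]
  exact h.map _

lemma evalMat_eq_map {m n : ℕ} (P : Matrix (Fin m) (Fin n) F[X]) (x : AlgebraicClosure F) :
    evalMat P x = P.map ((Polynomial.aeval x : F[X] →ₐ[F] AlgebraicClosure F) :
      F[X] →+* AlgebraicClosure F) := rfl

lemma evalMat_mul {m n p : ℕ} (A : Matrix (Fin m) (Fin n) F[X]) (B : Matrix (Fin n) (Fin p) F[X])
    (x : AlgebraicClosure F) : evalMat (A * B) x = evalMat A x * evalMat B x := by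
  simp only [evalMat_eq_map]
  exact Matrix.map_mul

lemma evalMat_one {n : ℕ} (x : AlgebraicClosure F) :
    evalMat (1 : Matrix (Fin n) (Fin n) F[X]) x = 1 := by
  simp only [evalMat_eq_map]
  exact Matrix.map_one _ (map_zero _) (map_one _)

-- rank of a matrix with a right inverse
lemma rank_eq_of_mul_eq_one {K : Type*} [Field K] {r n : ℕ} (A : Matrix (Fin r) (Fin n) K)
    (B : Matrix (Fin n) (Fin r) K) (h : A * B = 1) : A.rank = r := by
  refine le_antisymm (Matrix.rank_le_height A) ?_
  have h1 : (A * B).rank = r := by rw [h, Matrix.rank_one, Fintype.card_fin]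
  calc r = (A * B).rank := h1.symm
    _ ≤ A.rank := Matrix.rank_mul_le_left A B

lemma exists_vecMul_eq_zero {K : Type*} [Field K] {r n : ℕ} {A : Matrix (Fin r) (Fin n) K}
    (h : A.rank < r) : ∃ w : Fin r → K, w ≠ 0 ∧ w ᵥ* A = 0 := by
  have hk : LinearMap.ker (Aᵀ.mulVecLin) ≠ ⊥ := by
    intro hbot
    have := LinearMap.finrank_range_add_finrank_ker (Aᵀ.mulVecLin)
    rw [hbot, finrank_bot, add_zero] at this
    have : Aᵀ.rank = r := by
      simpa [Matrix.rank, Module.finrank_fin_fun] using this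
    rw [Matrix.rank_transpose] at this
    omega
  obtain ⟨w, hw, hw0⟩ := Submodule.exists_mem_ne_zero_of_ne_bot hk
  refine ⟨w, hw0, ?_⟩
  rw [← Matrix.mulVec_transpose]
  simpa [Matrix.mulVecLin, Matrix.mulVec_transpose] using hw

lemma rank_lt_of_zero_row {K : Type*} [Field K] {r n : ℕ} (A : Matrix (Fin r) (Fin n) K)
    (i₀ : Fin r) (h : ∀ j, A i₀ j = 0) : A.rank < r := by
  have hmem : (Pi.single i₀ 1 : Fin r → K) ∈ LinearMap.ker (Aᵀ.mulVecLin) := by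
    simp only [LinearMap.mem_ker, Matrix.mulVecLin_apply]
    rw [Matrix.mulVec_transpose]
    funext j
    simp [Matrix.vecMul, dotProduct, Pi.single_apply]
    exact h j
  have hrn := LinearMap.finrank_range_add_finrank_ker (Aᵀ.mulVecLin)
  rw [Module.finrank_fin_fun] at hrn
  have hker : LinearMap.ker (Aᵀ.mulVecLin) ≠ ⊥ := by
    intro hbot
    rw [hbot, Submodule.mem_bot] at hmem
    have := congrFun hmem i₀
    simp at this
  have hkpos : 0 < Module.finrank K (LinearMap.ker (Aᵀ.mulVecLin)) := by
    rcases Nat.eq_zero_or_pos (Module.finrank K (LinearMap.ker (Aᵀ.mulVecLin))) with h0 | h0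
    · exact absurd (Submodule.finrank_eq_zero.mp h0) hker
    · exact h0
  have hA : A.rank = Module.finrank K (LinearMap.range (Aᵀ.mulVecLin)) := by
    rw [← Matrix.rank_transpose A]; rfl
  omega

lemma exists_rowReduced {r n : ℕ} :
    ∀ (s : ℕ) (M : Matrix (Fin r) (Fin n) F[X]), (∑ i, rowDegNat M i) = s →
      normalRank M = r →
      ∃ W : Matrix (Fin r) (Fin r) F[X], IsUnit W.det ∧ RowReduced (W * M) := by
  intro s
  induction s using Nat.strong_induction_on with
  | _ s IH =>
  intro M hs hMr
  classical
  by_cases hred : RowReduced M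
  · exact ⟨1, by simp, by rwa [Matrix.one_mul]⟩
  have hlt : (hrMatrix M).rank < r := lt_of_le_of_ne (Matrix.rank_le_height _) hred
  obtain ⟨w, hw0, hw⟩ := exists_vecMul_eq_zero hlt
  set d : Fin r → ℕ := rowDegNat M with hd
  have hSne : (Finset.univ.filter (fun i => w i ≠ 0)).Nonempty := by
    obtain ⟨i, hi⟩ := Function.ne_iff.mp hw0
    exact ⟨i, by simpa using hi⟩
  obtain ⟨i₀, hi₀S, hi₀max⟩ := Finset.exists_max_image _ d hSne
  have hwi₀ : w i₀ ≠ 0 := by simpa using (Finset.mem_filter.mp hi₀S).2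
  have hmax : ∀ k, w k ≠ 0 → d k ≤ d i₀ := fun k hk =>
    hi₀max k (Finset.mem_filter.mpr ⟨Finset.mem_univ _, hk⟩)
  set u : Fin r → F[X] := fun j => Polynomial.C (w j) * Polynomial.X ^ (d i₀ - d j) with hu
  set We : Matrix (Fin r) (Fin r) F[X] :=
    (1 : Matrix (Fin r) (Fin r) F[X]).updateRow i₀ u with hWe
  have hdet : We.det = Polynomial.C (w i₀) := by
    have h1 : u = ∑ k, u k • (1 : Matrix (Fin r) (Fin r) F[X]) k := by
      funext j
      simp [Matrix.one_apply, Finset.sum_apply, mul_ite, Finset.sum_ite_eq]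
    rw [hWe, h1, Matrix.det_updateRow_sum]
    simp [hu]
  have hdetu : IsUnit We.det := by
    rw [hdet]
    exact Polynomial.isUnit_C.mpr (isUnit_iff_ne_zero.mpr hwi₀)
  set M' := We * M with hM'
  have hrow : ∀ i, i ≠ i₀ → M' i = M i := by
    intro i hi
    funext j
    simp [hM', hWe, Matrix.mul_apply, Matrix.updateRow_ne hi, Matrix.one_apply]
  have hentry : ∀ j', M' i₀ j' =
      ∑ k, Polynomial.C (w k) * M k j' * Polynomial.X ^ (d i₀ - d k) := by
    intro j'
    simp only [hM', Matrix.mul_apply, hWe, Matrix.updateRow_self, hu]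
    apply Finset.sum_congr rfl
    intro k _
    ring
  have hcz : ∀ (j' : Fin n) (m : ℕ), d i₀ ≤ m → (M' i₀ j').coeff m = 0 := by
    intro j' m hm
    rcases eq_or_lt_of_le hm with heq | hlt2
    · have hc : (M' i₀ j').coeff m = ∑ k, w k * hrMatrix M k j' := by
        rw [hentry, Polynomial.finset_sum_coeff]
        apply Finset.sum_congr rfl
        intro k _
        rw [Polynomial.coeff_mul_X_pow', Polynomial.coeff_C_mul]
        by_cases hwk : w k = 0
        · simp [hwk]
        · have hdk : d k ≤ d i₀ := hmax k hwk
          have he : d i₀ - d k ≤ m := le_trans (Nat.sub_le _ _) hm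
          rw [if_pos he, ← heq, Nat.sub_sub_self hdk]
          rfl
      rw [hc]
      have hj := congrFun hw j'
      simpa [Matrix.vecMul, dotProduct, hrMatrix] using hj
    · rw [hentry, Polynomial.finset_sum_coeff]
      apply Finset.sum_eq_zero
      intro k _
      rw [Polynomial.coeff_mul_X_pow', Polynomial.coeff_C_mul]
      by_cases hwk : w k = 0
      · simp [hwk]
      · have hdk : d k ≤ d i₀ := hmax k hwk
        split_ifs with he
        · have hlt3 : d k < m - (d i₀ - d k) := by omega
          have hnd : (M k j').natDegree ≤ d k :=
            Finset.le_sup (f := fun j => (M k j).natDegree) (Finset.mem_univ j')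
          rw [Polynomial.coeff_eq_zero_of_natDegree_lt (lt_of_le_of_lt hnd hlt3)]
          ring
        · ring
  have hdeg' : ∀ j', (M' i₀ j').degree < (d i₀ : ℕ) := by
    intro j'
    rw [Polynomial.degree_lt_iff_coeff_zero]
    intro m hm
    exact hcz j' m (by exact_mod_cast hm)
  have hM'rank : normalRank M' = r := by
    rw [hM', normalRank, toRat_mul,
      Matrix.rank_mul_eq_right_of_isUnit_det _ _ (toRat_det_isUnit hdetu)]
    exact hMr
  have hne : ∃ j', M' i₀ j' ≠ 0 := by
    by_contra hall
    push_neg at hall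
    have hr2 : (toRat M').rank < r :=
      rank_lt_of_zero_row _ i₀ (fun j => by simp [toRat, hall j])
    rw [show (toRat M').rank = normalRank M' from rfl, hM'rank] at hr2
    omega
  obtain ⟨j₁, hj₁⟩ := hne
  have hdpos : 1 ≤ d i₀ := by
    by_contra h0
    push_neg at h0
    have h00 : d i₀ = 0 := by omega
    have h1 := hdeg' j₁
    rw [h00] at h1
    have h2 : (0 : WithBot ℕ) ≤ (M' i₀ j₁).degree := Polynomial.zero_le_degree_iff.mpr hj₁
    exact absurd h1 (not_lt.mpr (by exact_mod_cast h2))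
  have hd' : rowDegNat M' i₀ < d i₀ := by
    have hle : rowDegNat M' i₀ ≤ d i₀ - 1 := by
      apply Finset.sup_le
      intro j _
      by_cases hz : M' i₀ j = 0
      · simp only [hz, Polynomial.natDegree_zero]; omega
      · have h1 := hdeg' j
        rw [Polynomial.degree_eq_natDegree hz, Nat.cast_lt] at h1
        omega
    omega
  have hsum : (∑ i, rowDegNat M' i) < s := by
    rw [← hs]
    apply Finset.sum_lt_sum
    · intro i _
      by_cases hii : i = i₀
      · subst hii; exact le_of_lt hd'
      · have hri : ∀ j, M' i j = M i j := fun j => congrFun (hrow i hii) j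
        simp only [rowDegNat]
        exact le_of_eq (Finset.sup_congr rfl (fun j _ => by rw [hri j]))
    · exact ⟨i₀, Finset.mem_univ _, hd'⟩
  obtain ⟨W', hW'det, hW'red⟩ := IH _ hsum M' rfl hM'rank
  refine ⟨W' * We, ?_, ?_⟩
  · rw [Matrix.det_mul]; exact hW'det.mul hdetu
  · rwa [Matrix.mul_assoc]

lemma rowSpace_eq_span {m n : ℕ} (P : Matrix (Fin m) (Fin n) F[X]) :
    rowSpace P = Submodule.span (RatFunc F) (Set.range (fun i => toRat P i)) := by
  rw [rowSpace, Matrix.range_mulVecLin]; rfl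

set_option maxHeartbeats 1000000 in
set_option synthInstance.maxHeartbeats 200000 in
lemma exists_saturated_basis {m n r : ℕ} (P : Matrix (Fin m) (Fin n) F[X])
    (hrank : normalRank P = r) :
    ∃ (R₀ : Matrix (Fin r) (Fin n) F[X]) (K₀ : Matrix (Fin n) (Fin r) F[X])
      (L₀ : Matrix (Fin m) (Fin r) F[X]),
      R₀ * K₀ = 1 ∧ P = L₀ * R₀ ∧ rowSpace R₀ = rowSpace P := by
  classical
  set ι : (Fin n → F[X]) →ₗ[F[X]] (Fin n → RatFunc F) :=
    LinearMap.compLeft (Algebra.linearMap F[X] (RatFunc F)) (Fin n) with hιdef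
  have hιapp : ∀ (v : Fin n → F[X]) (j : Fin n), ι v j = algebraMap F[X] (RatFunc F) (v j) :=
    fun v j => rfl
  have hιinj : Function.Injective ι := by
    intro a b h
    funext j
    exact IsFractionRing.injective F[X] (RatFunc F) (congrFun h j)
  set N : Submodule F[X] (Fin n → F[X]) :=
    Submodule.comap ι ((rowSpace P).restrictScalars F[X]) with hNdef
  have hmemN : ∀ v : Fin n → F[X], v ∈ N ↔ ι v ∈ rowSpace P := fun v => Iff.rfl
  have hPN : ∀ i : Fin m, (fun j => P i j) ∈ N := by
    intro i
    rw [hmemN]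
    rw [rowSpace_eq_span]
    apply Submodule.subset_span
    exact ⟨i, rfl⟩
  -- torsion-free quotient
  have hqtf : ∀ (a : F[X]) (x : (Fin n → F[X]) ⧸ N), a • x = 0 → a = 0 ∨ x = 0 := by
    intro a x hax
    rcases eq_or_ne a 0 with h | h
    · exact Or.inl h
    right
    obtain ⟨v, rfl⟩ := Submodule.mkQ_surjective N x
    rw [← _root_.map_smul, Submodule.mkQ_apply, Submodule.Quotient.mk_eq_zero] at hax
    rw [Submodule.mkQ_apply, Submodule.Quotient.mk_eq_zero]
    have h1 : ι (a • v) ∈ rowSpace P := hax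
    rw [_root_.map_smul] at h1
    have h2 : (algebraMap F[X] (RatFunc F) a) • ι v ∈ rowSpace P := by
      rwa [algebraMap_smul]
    have h3 : algebraMap F[X] (RatFunc F) a ≠ 0 :=
      (map_ne_zero_iff _ (IsFractionRing.injective F[X] (RatFunc F))).mpr h
    have h4 := (rowSpace P).smul_mem (algebraMap F[X] (RatFunc F) a)⁻¹ h2
    rw [inv_smul_smul₀ h3] at h4
    exact h4
  haveI : NoZeroSMulDivisors F[X] ((Fin n → F[X]) ⧸ N) := ⟨fun {a x} h => hqtf a x h⟩
  -- splitting
  obtain ⟨sec, hsec⟩ := Module.projective_lifting_property N.mkQ LinearMap.id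
    (Submodule.mkQ_surjective N)
  set ρ : (Fin n → F[X]) →ₗ[F[X]] (Fin n → F[X]) := LinearMap.id - sec ∘ₗ N.mkQ with hρdef
  have hρmem : ∀ v, ρ v ∈ N := by
    intro v
    rw [← Submodule.Quotient.mk_eq_zero, ← Submodule.mkQ_apply]
    rw [hρdef]
    simp only [LinearMap.sub_apply, LinearMap.id_apply, LinearMap.comp_apply, map_sub]
    have := congrArg (fun f => f (N.mkQ v)) hsec
    simp only [LinearMap.comp_apply, LinearMap.id_apply] at this
    rw [this, sub_self]
  have hρfix : ∀ v ∈ N, ρ v = v := by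
    intro v hv
    rw [hρdef]
    simp only [LinearMap.sub_apply, LinearMap.id_apply, LinearMap.comp_apply]
    rw [Submodule.mkQ_apply, (Submodule.Quotient.mk_eq_zero N).mpr hv, map_zero, sub_zero]
  -- basis of N
  obtain ⟨k, bk⟩ := Submodule.basisOfPid (Pi.basisFun F[X] (Fin n)) N
  set ιc : N →ₗ[F[X]] (Fin n → RatFunc F) := ι ∘ₗ N.subtype with hιcdef
  have key : ∀ y : N, ιc y ∈
      Submodule.span (RatFunc F) (Set.range fun i : Fin k => ιc (bk i)) := by
    intro y
    have hy := bk.sum_repr y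
    have h5 : ιc y = ∑ j, (bk.repr y) j • ιc (bk j) := by
      conv_lhs => rw [← hy]
      rw [map_sum]
      apply Finset.sum_congr rfl
      intro j _
      rw [_root_.map_smul]
    rw [h5]
    apply Submodule.sum_mem
    intro j _
    rw [← algebraMap_smul (RatFunc F)]
    exact Submodule.smul_mem _ _ (Submodule.subset_span ⟨j, rfl⟩)
  have hliR : LinearIndependent F[X] (fun i : Fin k => ιc (bk i)) := by
    have h1 := bk.linearIndependent
    have h2 : Function.Injective ιc := by
      intro a b h
      exact Subtype.ext (hιinj h)
    exact h1.map' ιc (LinearMap.ker_eq_bot.mpr h2)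
  have hliK : LinearIndependent (RatFunc F) (fun i : Fin k => ιc (bk i)) :=
    hliR.localization (RatFunc F) (nonZeroDivisors F[X])
  have hspan : Submodule.span (RatFunc F) (Set.range fun i : Fin k => ιc (bk i))
      = rowSpace P := by
    apply le_antisymm
    · rw [Submodule.span_le]
      rintro _ ⟨i, rfl⟩
      exact (bk i).2
    · rw [rowSpace_eq_span, Submodule.span_le]
      rintro _ ⟨i, rfl⟩
      exact key ⟨fun j => P i j, hPN i⟩
  have hfr : Module.finrank (RatFunc F) (rowSpace P) = r := by
    have h1 : (toRat P)ᵀ.rank = r := by rw [Matrix.rank_transpose]; exact hrank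
    exact h1
  have hkr : k = r := by
    have h1 : Module.finrank (RatFunc F)
        (Submodule.span (RatFunc F) (Set.range fun i : Fin k => ιc (bk i))) = k := by
      rw [finrank_span_eq_card hliK, Fintype.card_fin]
    rw [hspan, hfr] at h1
    omega
  set bN : Module.Basis (Fin r) F[X] N := bk.reindex (finCongr hkr) with hbNdef
  refine ⟨Matrix.of fun i j => (bN i : Fin n → F[X]) j,
    Matrix.of fun j i => bN.repr (⟨ρ (Pi.single j 1), hρmem _⟩ : N) i,
    Matrix.of fun i i' => bN.repr (⟨fun j => P i j, hPN i⟩ : N) i', ?_, ?_, ?_⟩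
  · -- R₀ * K₀ = 1
    refine Matrix.ext fun i i' => ?_
    rw [Matrix.mul_apply]
    set f : (Fin n → F[X]) →ₗ[F[X]] F[X] :=
      (Module.Basis.coord bN i') ∘ₗ (LinearMap.codRestrict N ρ hρmem) with hfdef
    have hf : ∀ v, f v = bN.repr (⟨ρ v, hρmem v⟩ : N) i' := fun v => rfl
    have h6 : ∀ j : Fin n, (Matrix.of fun j i => bN.repr
        (⟨ρ (Pi.single j 1), hρmem _⟩ : N) i) j i' = f (fun j' => if j = j' then 1 else 0) := by
      intro j
      have hsingle : (Pi.single j (1:F[X]) : Fin n → F[X])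
          = fun j' => if j = j' then 1 else 0 := by
        funext j'
        simp [Pi.single_apply, eq_comm]
      exact congrArg (fun v => bN.repr (⟨ρ v, hρmem v⟩ : N) i') hsingle
    have h7 := (LinearMap.pi_apply_eq_sum_univ f ((bN i : Fin n → F[X]))).symm
    calc (∑ j, (Matrix.of fun i j => (bN i : Fin n → F[X]) j) i j *
          (Matrix.of fun j i => bN.repr (⟨ρ (Pi.single j 1), hρmem _⟩ : N) i) j i')
        = ∑ j, (bN i : Fin n → F[X]) j • f (fun j' => if j = j' then 1 else 0) := by
          apply Finset.sum_congr rfl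
          intro j _
          rw [h6 j, Matrix.of_apply, smul_eq_mul]
      _ = f (bN i : Fin n → F[X]) := h7
      _ = (1 : Matrix (Fin r) (Fin r) F[X]) i i' := by
          rw [hf]
          have h8 : (⟨ρ (bN i : Fin n → F[X]), hρmem _⟩ : N) = bN i :=
            Subtype.ext (hρfix _ (bN i).2)
          rw [h8, Module.Basis.repr_self, Finsupp.single_apply, Matrix.one_apply]
  · -- P = L₀ * R₀
    refine Matrix.ext fun i j => ?_
    rw [Matrix.mul_apply]
    have h2 : (fun j => P i j) =
        ((∑ i', bN.repr (⟨fun j => P i j, hPN i⟩ : N) i' • bN i' : N) : Fin n → F[X]) := by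
      rw [bN.sum_repr]
    have h3 := congrFun h2 j
    calc P i j = ((∑ i', bN.repr (⟨fun j => P i j, hPN i⟩ : N) i' • bN i' : N)
          : Fin n → F[X]) j := h3
      _ = ∑ i', bN.repr (⟨fun j => P i j, hPN i⟩ : N) i' * (bN i' : Fin n → F[X]) j := by
          push_cast
          rw [Finset.sum_apply]
          apply Finset.sum_congr rfl
          intro i' _
          simp
      _ = _ := rfl
  · -- rowSpace R₀ = rowSpace P
    rw [rowSpace_eq_span]
    have h9 : (fun i : Fin r => toRat (Matrix.of fun i j => (bN i : Fin n → F[X]) j) i)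
        = fun i : Fin r => ιc (bN i) := by
      funext i
      funext j
      rfl
    rw [h9]
    have h10 : (fun i : Fin r => ιc (bN i))
        = (fun i : Fin k => ιc (bk i)) ∘ (finCongr hkr).symm := by
      funext i
      rw [Function.comp_apply, hbNdef, Module.Basis.reindex_apply]
    rw [h10, Function.Surjective.range_comp (finCongr hkr).symm.surjective]
    exact hspan

set_option maxHeartbeats 1000000 in
lemma extend_to_unimodular {r n : ℕ} (hrn : r ≤ n) (M : Matrix (Fin r) (Fin n) F[X])
    (K : Matrix (Fin n) (Fin r) F[X]) (hMK : M * K = 1) :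
    ∃ B : Matrix (Fin n) (Fin n) F[X], IsUnit B.det ∧
      ∀ (i : Fin r) (j : Fin n), B (Fin.castLE hrn i) j = M i j := by
  classical
  set G : Matrix (Fin n) (Fin r) F[X] := Mᵀ with hG
  have hKG : Kᵀ * G = 1 := by
    rw [hG, ← Matrix.transpose_mul, hMK, Matrix.transpose_one]
  set p : (Fin n → F[X]) →ₗ[F[X]] (Fin n → F[X]) := (G * Kᵀ).mulVecLin with hp
  have hmatidem : (G * Kᵀ) * (G * Kᵀ) = G * Kᵀ := by
    rw [Matrix.mul_assoc, ← Matrix.mul_assoc Kᵀ G Kᵀ, hKG, Matrix.one_mul]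
  have hidem : p ∘ₗ p = p := by
    rw [hp, ← Matrix.mulVecLin_mul, hmatidem]
  obtain ⟨q, hq⟩ := (LinearMap.isProj_iff_isIdempotentElem p).mpr hidem
  have hinj : Function.Injective G.mulVecLin := by
    intro a b hab
    have h1 : (Kᵀ * G).mulVecLin a = (Kᵀ * G).mulVecLin b := by
      rw [Matrix.mulVecLin_mul]
      simp only [LinearMap.comp_apply, hab]
    rwa [hKG, Matrix.mulVecLin_one, LinearMap.id_apply, LinearMap.id_apply] at h1
  have hqrange : q = LinearMap.range G.mulVecLin := by
    apply le_antisymm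
    · intro x hx
      rw [← hq.map_id x hx]
      rw [hp, Matrix.mulVecLin_mul]
      exact ⟨Kᵀ.mulVecLin x, rfl⟩
    · rintro _ ⟨y, rfl⟩
      have h2 : p (G.mulVecLin y) = G.mulVecLin y := by
        rw [hp, ← LinearMap.comp_apply, ← Matrix.mulVecLin_mul, Matrix.mul_assoc, hKG,
          Matrix.mul_one]
      rw [← h2]
      exact hq.map_mem _
  let eq1 : (Fin r → F[X]) ≃ₗ[F[X]] LinearMap.range G.mulVecLin :=
    LinearEquiv.ofInjective G.mulVecLin hinj
  let bRange : Module.Basis (Fin r) F[X] (LinearMap.range G.mulVecLin) :=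
    (Pi.basisFun F[X] (Fin r)).map eq1
  have hcompl : IsCompl (LinearMap.range G.mulVecLin) (LinearMap.ker p) :=
    hqrange ▸ hq.isCompl
  obtain ⟨k, bKer⟩ := Submodule.basisOfPid (Pi.basisFun F[X] (Fin n)) (LinearMap.ker p)
  set bV : Module.Basis (Fin r ⊕ Fin k) F[X] (Fin n → F[X]) :=
    (bRange.prod bKer).map (Submodule.prodEquivOfIsCompl _ _ hcompl) with hbV
  have hcard : r + k = n := by
    have h1 := Module.finrank_eq_card_basis bV
    rw [Module.finrank_pi, Fintype.card_fin, Fintype.card_sum, Fintype.card_fin,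
      Fintype.card_fin] at h1
    omega
  set eIdx : (Fin r ⊕ Fin k) ≃ Fin n := finSumFinEquiv.trans (finCongr hcard) with heIdx
  refine ⟨Matrix.of fun a j => (bV (eIdx.symm a)) j, ?_, ?_⟩
  · have hmat : (Pi.basisFun F[X] (Fin n)).toMatrix (bV.reindex eIdx)
        = (Matrix.of fun a j => (bV (eIdx.symm a)) j)ᵀ := by
      refine Matrix.ext fun j a => ?_
      rw [Module.Basis.toMatrix_apply, Pi.basisFun_repr, Module.Basis.reindex_apply, Matrix.transpose_apply,
        Matrix.of_apply]
    haveI := (Pi.basisFun F[X] (Fin n)).invertibleToMatrix (bV.reindex eIdx)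
    have hu : IsUnit ((Pi.basisFun F[X] (Fin n)).toMatrix (bV.reindex eIdx)).det :=
      Matrix.isUnit_det_of_invertible _
    rw [hmat, Matrix.det_transpose] at hu
    exact hu
  · intro i j
    have h1 : eIdx.symm (Fin.castLE hrn i) = Sum.inl i := by
      rw [Equiv.symm_apply_eq, heIdx]
      apply Fin.ext
      simp [finSumFinEquiv_apply_left]
    rw [Matrix.of_apply, h1]
    have h2 : bV (Sum.inl i) = ((bRange i : Fin n → F[X])) := by
      rw [hbV, Module.Basis.map_apply]
      have h3 : (bRange.prod bKer) (Sum.inl i) = (bRange i, (0 : LinearMap.ker p)) := by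
        apply Prod.ext
        · rw [Module.Basis.prod_apply_inl_fst]
        · rw [Module.Basis.prod_apply_inl_snd]
      rw [h3, Submodule.coe_prodEquivOfIsCompl']
      simp
    rw [h2]
    have h4 : (bRange i : Fin n → F[X]) = G.mulVecLin (Pi.single i 1) := by
      rw [show bRange i = eq1 ((Pi.basisFun F[X] (Fin r)) i) from Module.Basis.map_apply _ _ _]
      rw [Pi.basisFun_apply]
      rfl
    rw [h4]
    have h5 : G.mulVecLin (Pi.single i 1) j = G j i := by
      simp [Matrix.mulVecLin_apply, Matrix.mulVec_single]
    rw [h5, hG, Matrix.transpose_apply]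

lemma rowSpace_mul_le {m n p : ℕ} (A : Matrix (Fin m) (Fin p) F[X])
    (B : Matrix (Fin p) (Fin n) F[X]) : rowSpace (A * B) ≤ rowSpace B := by
  rw [rowSpace, rowSpace]
  rintro _ ⟨x, rfl⟩
  refine ⟨(toRat A)ᵀ.mulVec x, ?_⟩
  rw [Matrix.mulVecLin_apply, Matrix.mulVecLin_apply, toRat_mul, Matrix.transpose_mul,
    Matrix.mulVec_mulVec]

lemma row_package {m n r : ℕ} (P : Matrix (Fin m) (Fin n) F[X]) (hrank : normalRank P = r)
    (hrn : r ≤ n) :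
    ∃ (Rr : Matrix (Fin r) (Fin n) F[X]) (Km : Matrix (Fin n) (Fin r) F[X])
      (L : Matrix (Fin m) (Fin r) F[X]) (B : Matrix (Fin n) (Fin n) F[X]),
      Rr * Km = 1 ∧ P = L * Rr ∧ IsMinimalRowBasis Rr ∧ rowSpace Rr = rowSpace P ∧
      IsUnit B.det ∧ ∀ (i : Fin r) (j : Fin n), B (Fin.castLE hrn i) j = Rr i j := by
  obtain ⟨R₀, K₀, L₀, hRK, hPL, hRS⟩ := exists_saturated_basis P hrank
  have hfrP : Module.finrank (RatFunc F) (rowSpace P) = r := by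
    have h1 : (toRat P)ᵀ.rank = r := by rw [Matrix.rank_transpose]; exact hrank
    exact h1
  have hR₀rank : normalRank R₀ = r := by
    have h1 : (toRat R₀)ᵀ.rank = r := by
      show Module.finrank (RatFunc F) (LinearMap.range (toRat R₀)ᵀ.mulVecLin) = r
      rw [show LinearMap.range (toRat R₀)ᵀ.mulVecLin = rowSpace R₀ from rfl, hRS]
      exact hfrP
    rw [normalRank, ← Matrix.rank_transpose]
    exact h1
  obtain ⟨W, hWdet, hWred⟩ := exists_rowReduced (∑ i, rowDegNat R₀ i) R₀ rfl hR₀rank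
  have hWmul : W * W⁻¹ = 1 := Matrix.mul_nonsing_inv W hWdet
  have hWmul' : W⁻¹ * W = 1 := Matrix.nonsing_inv_mul W hWdet
  have hRrKm : (W * R₀) * (K₀ * W⁻¹) = 1 := by
    rw [Matrix.mul_assoc W R₀ (K₀ * W⁻¹), ← Matrix.mul_assoc R₀ K₀ W⁻¹, hRK,
      Matrix.one_mul, hWmul]
  obtain ⟨B, hB1, hB2⟩ := extend_to_unimodular hrn (W * R₀) (K₀ * W⁻¹) hRrKm
  refine ⟨W * R₀, K₀ * W⁻¹, L₀ * W⁻¹, B, hRrKm, ?_, ?_, ?_, hB1, hB2⟩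
  · rw [← Matrix.mul_assoc (L₀ * W⁻¹) W R₀, Matrix.mul_assoc L₀ W⁻¹ W, hWmul', Matrix.mul_one]
    exact hPL
  · constructor
    · intro x
      have h1 : evalMat (W * R₀) x * evalMat (K₀ * W⁻¹) x = 1 := by
        rw [← evalMat_mul, hRrKm, evalMat_one]
      exact rank_eq_of_mul_eq_one _ _ h1
    · exact hWred
  · apply le_antisymm
    · exact le_trans (rowSpace_mul_le W R₀) (le_of_eq hRS)
    · rw [← hRS]
      have h2 : R₀ = W⁻¹ * (W * R₀) := by
        rw [← Matrix.mul_assoc, hWmul', Matrix.one_mul]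
      calc rowSpace R₀ = rowSpace (W⁻¹ * (W * R₀)) := by rw [← h2]
        _ ≤ rowSpace (W * R₀) := rowSpace_mul_le _ _

lemma sum_ite_left {r : ℕ} (t : ℕ) (f : Fin r → F[X]) :
    (∑ k : Fin r, (if t = (k:ℕ) then (1:F[X]) else 0) * f k)
      = if h : t < r then f ⟨t, h⟩ else 0 := by
  split_ifs with h
  · rw [Finset.sum_eq_single (⟨t, h⟩ : Fin r)]
    · rw [if_pos rfl, one_mul]
    · intro b _ hb
      rw [if_neg, zero_mul]
      intro he
      exact hb (Fin.ext he.symm)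
    · intro hmem; exact absurd (Finset.mem_univ _) hmem
  · apply Finset.sum_eq_zero
    intro k _
    rw [if_neg, zero_mul]
    intro he
    exact h (he ▸ k.2)

lemma sum_ite_right {r : ℕ} (t : ℕ) (f : Fin r → F[X]) :
    (∑ k : Fin r, f k * (if (k:ℕ) = t then (1:F[X]) else 0))
      = if h : t < r then f ⟨t, h⟩ else 0 := by
  split_ifs with h
  · rw [Finset.sum_eq_single (⟨t, h⟩ : Fin r)]
    · rw [if_pos rfl, mul_one]
    · intro b _ hb
      rw [if_neg, mul_zero]
      intro he
      exact hb (Fin.ext he)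
    · intro hmem; exact absurd (Finset.mem_univ _) hmem
  · apply Finset.sum_eq_zero
    intro k _
    rw [if_neg, mul_zero]
    intro he
    exact h (he ▸ k.2)

lemma mul_J {m r : ℕ} (hrm : r ≤ m) (A : Matrix (Fin m) (Fin m) F[X]) :
    (A * Matrix.of (fun (i : Fin m) (k : Fin r) => if (i:ℕ) = (k:ℕ) then (1:F[X]) else 0))
      = Matrix.of (fun i k => A i (Fin.castLE hrm k)) := by
  refine Matrix.ext fun i k => ?_
  rw [Matrix.mul_apply, Matrix.of_apply]
  rw [Finset.sum_eq_single (Fin.castLE hrm k)]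
  · rw [Matrix.of_apply, if_pos (by simp), mul_one]
  · intro b _ hb
    rw [Matrix.of_apply, if_neg, mul_zero]
    intro he; exact hb (Fin.ext he)
  · intro hmem; exact absurd (Finset.mem_univ _) hmem

lemma J_mul {n r : ℕ} (hrn : r ≤ n) (B : Matrix (Fin n) (Fin n) F[X]) :
    (Matrix.of (fun (k : Fin r) (l : Fin n) => if (k:ℕ) = (l:ℕ) then (1:F[X]) else 0) * B)
      = Matrix.of (fun k j => B (Fin.castLE hrn k) j) := by
  refine Matrix.ext fun k j => ?_
  rw [Matrix.mul_apply, Matrix.of_apply]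
  rw [Finset.sum_eq_single (Fin.castLE hrn k)]
  · rw [Matrix.of_apply, if_pos (by simp), one_mul]
  · intro b _ hb
    rw [Matrix.of_apply, if_neg, zero_mul]
    intro he; exact hb (Fin.ext he.symm)
  · intro hmem; exact absurd (Finset.mem_univ _) hmem

end Helpers

/-- The three minimal rank factorizations of a polynomial matrix of normal rank r > 0.
The conditions about invariant polynomials are stated as unimodular equivalence of P with
the corresponding factor embedded into an m×n matrix padded with zeros. -/
theorem minimal_rank_factorizations_exist
    {F : Type*} [Field F] {m n r : ℕ}
    (P : Matrix (Fin m) (Fin n) F[X])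
    (hrank : normalRank P = r) (hr0 : 0 < r) :
    (∃ (Lc : Matrix (Fin m) (Fin r) F[X]) (E : Matrix (Fin r) (Fin r) F[X])
       (Rr : Matrix (Fin r) (Fin n) F[X])
       (U : Matrix (Fin m) (Fin m) F[X]) (V : Matrix (Fin n) (Fin n) F[X]),
        P = Lc * E * Rr ∧
        IsMinimalColBasis Lc ∧ colSpace Lc = colSpace P ∧
        IsMinimalRowBasis Rr ∧ rowSpace Rr = rowSpace P ∧
        IsUnit U.det ∧ IsUnit V.det ∧
        U * P * V = Matrix.of (fun (i : Fin m) (j : Fin n) =>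
          if h : (i : ℕ) < r ∧ (j : ℕ) < r then E ⟨i, h.1⟩ ⟨j, h.2⟩ else 0)) ∧
    (∃ (Lc : Matrix (Fin m) (Fin r) F[X]) (R : Matrix (Fin r) (Fin n) F[X])
       (U : Matrix (Fin m) (Fin m) F[X]) (V : Matrix (Fin n) (Fin n) F[X]),
        P = Lc * R ∧
        IsMinimalColBasis Lc ∧ colSpace Lc = colSpace P ∧
        IsUnit U.det ∧ IsUnit V.det ∧
        U * P * V = Matrix.of (fun (i : Fin m) (j : Fin n) =>
          if h : (i : ℕ) < r then R ⟨i, h⟩ j else 0)) ∧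
    (∃ (L : Matrix (Fin m) (Fin r) F[X]) (Rr : Matrix (Fin r) (Fin n) F[X])
       (U : Matrix (Fin m) (Fin m) F[X]) (V : Matrix (Fin n) (Fin n) F[X]),
        P = L * Rr ∧
        IsMinimalRowBasis Rr ∧ rowSpace Rr = rowSpace P ∧
        IsUnit U.det ∧ IsUnit V.det ∧
        U * P * V = Matrix.of (fun (i : Fin m) (j : Fin n) =>
          if h : (j : ℕ) < r then L i ⟨j, h⟩ else 0)) := by
  classical
  have hrn : r ≤ n := by rw [← hrank]; exact Matrix.rank_le_width (toRat P)
  have hrm : r ≤ m := by rw [← hrank]; exact Matrix.rank_le_height (toRat P)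
  obtain ⟨Rr, Km, L, B, hRrKm, hPLRr, hminRr, hRrS, hBdet, hB⟩ := row_package P hrank hrn
  have hrankT : normalRank Pᵀ = r := by rw [normalRank_transpose]; exact hrank
  obtain ⟨Rc, Kc, Lt, Bc, hRcKc, hPtLt, hminRc, hRcS, hBcdet, hBc⟩ :=
    row_package Pᵀ hrankT hrm
  -- J matrices
  set Jl : Matrix (Fin m) (Fin r) F[X] :=
    Matrix.of (fun i k => if (i:ℕ) = (k:ℕ) then 1 else 0) with hJl
  set Jr : Matrix (Fin r) (Fin n) F[X] :=
    Matrix.of (fun k j => if (k:ℕ) = (j:ℕ) then 1 else 0) with hJr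
  have hAJl : Bcᵀ * Jl = Rcᵀ := by
    rw [hJl, mul_J hrm Bcᵀ]
    refine Matrix.ext fun i k => ?_
    rw [Matrix.of_apply, Matrix.transpose_apply, hBc]
    rfl
  have hJrB : Jr * B = Rr := by
    rw [hJr, J_mul hrn B]
    refine Matrix.ext fun k j => ?_
    rw [Matrix.of_apply, hB]
  -- embedding identities
  have hEmb : ∀ (E : Matrix (Fin r) (Fin r) F[X]), Jl * (E * Jr) =
      Matrix.of (fun (i : Fin m) (j : Fin n) =>
        if h : (i : ℕ) < r ∧ (j : ℕ) < r then E ⟨i, h.1⟩ ⟨j, h.2⟩ else 0) := by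
    intro E
    refine Matrix.ext fun i j => ?_
    have h1 : ∀ k : Fin r, (E * Jr) k j = if h : (j:ℕ) < r then E k ⟨j, h⟩ else 0 := by
      intro k
      rw [Matrix.mul_apply]
      exact sum_ite_right _ _
    rw [Matrix.mul_apply]
    have h2 : (∑ k, Jl i k * (E * Jr) k j)
        = ∑ k : Fin r, (if (i:ℕ) = (k:ℕ) then (1:F[X]) else 0) *
            (if h : (j:ℕ) < r then E k ⟨j, h⟩ else 0) := by
      apply Finset.sum_congr rfl
      intro k _
      rw [h1 k]
      rfl
    rw [h2, sum_ite_left, Matrix.of_apply]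
    by_cases hi : (i:ℕ) < r <;> by_cases hj : (j:ℕ) < r <;> simp [hi, hj]
  have hEmb2 : ∀ (R : Matrix (Fin r) (Fin n) F[X]), Jl * R =
      Matrix.of (fun (i : Fin m) (j : Fin n) =>
        if h : (i : ℕ) < r then R ⟨i, h⟩ j else 0) := by
    intro R
    refine Matrix.ext fun i j => ?_
    rw [Matrix.mul_apply, Matrix.of_apply]
    exact sum_ite_left _ _
  have hEmb3 : ∀ (L' : Matrix (Fin m) (Fin r) F[X]), L' * Jr =
      Matrix.of (fun (i : Fin m) (j : Fin n) =>
        if h : (j : ℕ) < r then L' i ⟨j, h⟩ else 0) := by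
    intro L'
    refine Matrix.ext fun i j => ?_
    rw [Matrix.mul_apply, Matrix.of_apply]
    exact sum_ite_right _ _
  -- inverses
  have hAdet : IsUnit (Bcᵀ).det := by rw [Matrix.det_transpose]; exact hBcdet
  have hAmul : Bcᵀ * Bcᵀ⁻¹ = 1 := Matrix.mul_nonsing_inv _ hAdet
  have hAmul' : Bcᵀ⁻¹ * Bcᵀ = 1 := Matrix.nonsing_inv_mul _ hAdet
  have hAidet : IsUnit (Bcᵀ⁻¹).det := by
    have h := congrArg Matrix.det hAmul'
    rw [Matrix.det_mul, Matrix.det_one] at h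
    exact IsUnit.of_mul_eq_one _ h
  have hBmul : B * B⁻¹ = 1 := Matrix.mul_nonsing_inv _ hBdet
  have hBidet : IsUnit (B⁻¹).det := by
    have h := congrArg Matrix.det (Matrix.nonsing_inv_mul B hBdet)
    rw [Matrix.det_mul, Matrix.det_one] at h
    exact IsUnit.of_mul_eq_one _ h
  -- column-side facts
  have hPLc : P = Rcᵀ * Ltᵀ := by
    have h := congrArg Matrix.transpose hPtLt
    rwa [Matrix.transpose_transpose, Matrix.transpose_mul] at h
  have hKcLc : Kcᵀ * Rcᵀ = 1 := by
    rw [← Matrix.transpose_mul, hRcKc, Matrix.transpose_one]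
  have hminLc : IsMinimalColBasis Rcᵀ := by
    constructor
    · intro x
      have h1 : evalMat Rcᵀ x = (evalMat Rc x)ᵀ := Matrix.ext fun i j => rfl
      rw [h1, Matrix.rank_transpose]
      exact hminRc.1 x
    · have h2 : hcMatrix Rcᵀ = (hrMatrix Rc)ᵀ := Matrix.ext fun i j => rfl
      rw [ColReduced, h2, Matrix.rank_transpose]
      exact hminRc.2
  have hcolLc : colSpace Rcᵀ = colSpace P := by
    have e1 : colSpace Rcᵀ = rowSpace Rc := by
      rw [colSpace, rowSpace, toRat_transpose]
    have e2 : colSpace P = rowSpace Pᵀ := by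
      rw [colSpace, rowSpace, toRat_transpose, Matrix.transpose_transpose]
    rw [e1, e2, hRcS]
  -- factorization identities
  have hPKmRr : (P * Km) * Rr = P := by
    rw [hPLRr, Matrix.mul_assoc L Rr Km, hRrKm, Matrix.mul_one]
  have hLcKcP : (Rcᵀ * Kcᵀ) * P = P := by
    conv_lhs => rw [hPLc]
    rw [Matrix.mul_assoc Rcᵀ Kcᵀ (Rcᵀ * Ltᵀ), ← Matrix.mul_assoc Kcᵀ Rcᵀ Ltᵀ, hKcLc,
      Matrix.one_mul, ← hPLc]
  have hPE : P = Rcᵀ * (Kcᵀ * (P * Km)) * Rr := by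
    rw [← Matrix.mul_assoc Rcᵀ Kcᵀ (P * Km),
      Matrix.mul_assoc (Rcᵀ * Kcᵀ) (P * Km) Rr, hPKmRr, hLcKcP]
  refine ⟨⟨Rcᵀ, Kcᵀ * (P * Km), Rr, Bcᵀ⁻¹, B⁻¹, hPE, hminLc, hcolLc, hminRr, hRrS,
    hAidet, hBidet, ?_⟩, ⟨Rcᵀ, Ltᵀ, Bcᵀ⁻¹, 1, hPLc, hminLc, hcolLc, hAidet,
    (by rw [Matrix.det_one]; exact isUnit_one), ?_⟩,
    ⟨L, Rr, 1, B⁻¹, hPLRr, hminRr, hRrS,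
    (by rw [Matrix.det_one]; exact isUnit_one), hBidet, ?_⟩⟩
  · rw [← hEmb (Kcᵀ * (P * Km))]
    have hPemb : P = Bcᵀ * (Jl * ((Kcᵀ * (P * Km)) * Jr)) * B := by
      rw [← Matrix.mul_assoc Bcᵀ Jl ((Kcᵀ * (P * Km)) * Jr), hAJl,
        Matrix.mul_assoc Rcᵀ ((Kcᵀ * (P * Km)) * Jr) B,
        Matrix.mul_assoc (Kcᵀ * (P * Km)) Jr B, hJrB,
        ← Matrix.mul_assoc Rcᵀ (Kcᵀ * (P * Km)) Rr]
      exact hPE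
    conv_lhs => rw [hPemb]
    rw [← Matrix.mul_assoc Bcᵀ⁻¹ (Bcᵀ * (Jl * ((Kcᵀ * (P * Km)) * Jr))) B,
      ← Matrix.mul_assoc Bcᵀ⁻¹ Bcᵀ (Jl * ((Kcᵀ * (P * Km)) * Jr)), hAmul', Matrix.one_mul,
      Matrix.mul_assoc (Jl * ((Kcᵀ * (P * Km)) * Jr)) B B⁻¹, hBmul, Matrix.mul_one]
  · rw [← hEmb2 Ltᵀ, Matrix.mul_one]
    conv_lhs => rw [hPLc, ← hAJl]
    rw [Matrix.mul_assoc Bcᵀ Jl Ltᵀ, ← Matrix.mul_assoc Bcᵀ⁻¹ Bcᵀ (Jl * Ltᵀ), hAmul',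
      Matrix.one_mul]
  · rw [← hEmb3 L, Matrix.one_mul]
    conv_lhs => rw [hPLRr, ← hJrB, ← Matrix.mul_assoc L Jr B]
    rw [Matrix.mul_assoc (L * Jr) B B⁻¹, hBmul, Matrix.mul_one]
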